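/- Let P be a definite logic program whose rules define every predicate symbol occurring in P, let D be its set of rules viewed as a definition of all its predicates, let CF be a set of constant and function symbols containing all constants and functors of P and at least one constant, and let Σ be the set of all symbols of P together with CF. Then a structure M interpreting Σ satisfies D as a definition and satisfies the Herbrand Axiom Herb(CF) if and only if M is isomorphic relative to Σ to the least Herbrand model LHM_CF(P). -/

import Mathlib

/-- Terms over function symbols `Func` (with arities `arF`) and variables `V`.
Constants are the function symbols of arity `0`. -/
inductive Term (Func : Type) (arF : Func → ℕ) (V : Type) : Type
  | var : V → Term Func arF V
  | func : (f : Func) → (Fin (arF f) → Term Func arF V) → Term Func arF V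

/-- Ground terms: terms without variables.  `GTerm Func arF` is the Herbrand
universe `HU(CF)` for the set `CF` of constant and function symbols. -/
abbrev GTerm (Func : Type) (arF : Func → ℕ) : Type := Term Func arF Empty

/-- A first-order structure for the vocabulary with function symbols `Func`
(arities `arF`) and predicate symbols `Pred` (arities `arP`): a nonempty universe
together with interpretations of all function and predicate symbols. -/
structure Struc (Func : Type) (arF : Func → ℕ) (Pred : Type) (arP : Pred → ℕ) : Type 1 where
  carrier : Type
  nonempty : Nonempty carrier
  interpF : (f : Func) → (Fin (arF f) → carrier) → carrier
  interpP : (p : Pred) → (Fin (arP p) → carrier) → Prop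

variable {Func : Type} {arF : Func → ℕ} {Pred : Type} {arP : Pred → ℕ}

/-- Evaluation of a term in a structure under a variable assignment. -/
def Term.eval (M : Struc Func arF Pred arP) {V : Type} (σ : V → M.carrier) :
    Term Func arF V → M.carrier
  | .var v => σ v
  | .func f args => M.interpF f fun i => (args i).eval M σ

/-- An atomic formula `p(t₁, …, tₖ)` with variables from `V`. -/
structure Atom (Func : Type) (arF : Func → ℕ) (Pred : Type) (arP : Pred → ℕ)
    (V : Type) : Type where
  pred : Pred
  args : Fin (arP pred) → Term Func arF V

/-- A rule `A ← B₁, …, Bₙ` of a definite logic program (variables are natural numbers). -/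
structure Rule (Func : Type) (arF : Func → ℕ) (Pred : Type) (arP : Pred → ℕ) : Type where
  head : Atom Func arF Pred arP ℕ
  body : List (Atom Func arF Pred arP ℕ)

/-- Truth of an atom in a structure under an assignment. -/
def Atom.holds (M : Struc Func arF Pred arP) {V : Type} (σ : V → M.carrier)
    (a : Atom Func arF Pred arP V) : Prop :=
  M.interpP a.pred fun i => (a.args i).eval M σ

/-- A structure satisfies a rule as a first-order implication: the universal closure
of `B₁ ∧ ⋯ ∧ Bₙ → A`. -/
def Rule.holds (M : Struc Func arF Pred arP) (r : Rule Func arF Pred arP) : Prop :=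
  ∀ σ : ℕ → M.carrier, (∀ b ∈ r.body, b.holds M σ) → r.head.holds M σ

/-- `M` satisfies all rules of `D` as first-order implications (the Horn theory of `D`). -/
def SatRules (M : Struc Func arF Pred arP) (D : Set (Rule Func arF Pred arP)) : Prop :=
  ∀ r ∈ D, r.holds M

/-- `M` satisfies the rule set `D` as a definition of all predicate symbols:
`M` satisfies every rule as an implication, and for every structure `N` with the same
universe and the same interpretation of all parameter symbols (here: all function
symbols) that satisfies every rule as an implication, `p^M ⊆ p^N` for every defined
predicate `p` (here: every predicate). -/
def SatDef (D : Set (Rule Func arF Pred arP)) (M : Struc Func arF Pred arP) : Prop :=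
  SatRules M D ∧
    ∀ IP : (p : Pred) → (Fin (arP p) → M.carrier) → Prop,
      SatRules ⟨M.carrier, M.nonempty, M.interpF, IP⟩ D →
        ∀ p args, M.interpP p args → IP p args

/-- If `CF` contains at least one constant then the Herbrand universe is nonempty. -/
theorem nonempty_gterm (hc : ∃ f : Func, arF f = 0) : Nonempty (GTerm Func arF) := by
  obtain ⟨f, hf⟩ := hc
  exact ⟨.func f fun i => (Fin.cast hf i).elim0⟩

/-- The Herbrand structure with universe `HU(CF)`, Herbrand values for all constant and
function symbols, and predicate interpretations `IP`. -/
def HStruc (h : Nonempty (GTerm Func arF))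
    (IP : (p : Pred) → (Fin (arP p) → GTerm Func arF) → Prop) :
    Struc Func arF Pred arP :=
  ⟨GTerm Func arF, h, fun f args => .func f args, IP⟩

/-- The least Herbrand model of the program `D`: the Herbrand structure interpreting
each predicate by the intersection of its interpretations over all Herbrand models. -/
def LHM (D : Set (Rule Func arF Pred arP)) (h : Nonempty (GTerm Func arF)) :
    Struc Func arF Pred arP :=
  HStruc h fun p args =>
    ∀ IP : (p : Pred) → (Fin (arP p) → GTerm Func arF) → Prop,
      SatRules (HStruc h IP) D → IP p args

/-- `M` satisfies the Herbrand Axiom `Herb(CF)`: `M` is isomorphic, relative to the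
function symbols `CF`, to a structure with universe `HU(CF)` and Herbrand values for
all symbols of `CF`. -/
def SatHerb (M : Struc Func arF Pred arP) : Prop :=
  ∃ e : GTerm Func arF ≃ M.carrier,
    ∀ (f : Func) (args : Fin (arF f) → GTerm Func arF),
      e (.func f args) = M.interpF f fun i => e (args i)

/-- `M` and `N` are isomorphic relative to the full vocabulary `Σ`: a bijection of the
universes commuting with the interpretations of all function and predicate symbols. -/
def Iso (M N : Struc Func arF Pred arP) : Prop :=
  ∃ e : M.carrier ≃ N.carrier,
    (∀ (f : Func) (args : Fin (arF f) → M.carrier),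
        e (M.interpF f args) = N.interpF f fun i => e (args i)) ∧
    (∀ (p : Pred) (args : Fin (arP p) → M.carrier),
        M.interpP p args ↔ N.interpP p fun i => e (args i))

/-- A ground atom: an atomic formula without variables. -/
abbrev GAtom (Func : Type) (arF : Func → ℕ) (Pred : Type) (arP : Pred → ℕ) : Type :=
  Atom Func arF Pred arP Empty

/-- Truth of a ground atom in a structure. -/
def GAtom.holds (M : Struc Func arF Pred arP) (a : GAtom Func arF Pred arP) : Prop :=
  M.interpP a.pred fun i => (a.args i).eval M fun v => v.elim

/-- Term evaluation only depends on the function interpretations. -/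
lemma eval_hstruc {h h' : Nonempty (GTerm Func arF)}
    {IP IP' : (p : Pred) → (Fin (arP p) → GTerm Func arF) → Prop}
    {V : Type} (σ : V → GTerm Func arF) (t : Term Func arF V) :
    Term.eval (HStruc h IP) σ t = Term.eval (HStruc (arP := arP) h' IP') σ t := by
  induction t with
  | var v => rfl
  | func f a ih => simp only [Term.eval]; exact congrArg _ (funext ih)

/-- A function-commuting bijection commutes with term evaluation. -/
lemma iso_eval {M N : Struc Func arF Pred arP} (e : M.carrier ≃ N.carrier)
    (hf : ∀ f args, e (M.interpF f args) = N.interpF f fun i => e (args i))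
    {V : Type} (σ : V → M.carrier) (t : Term Func arF V) :
    e (t.eval M σ) = t.eval N (fun v => e (σ v)) := by
  induction t with
  | var v => rfl
  | func f a ih => simp only [Term.eval, hf]; exact congrArg _ (funext ih)

/-- Satisfaction of rules transfers along isomorphisms. -/
lemma iso_satRules {M N : Struc Func arF Pred arP} (hiso : Iso M N)
    {D : Set (Rule Func arF Pred arP)} (hM : SatRules M D) : SatRules N D := by
  obtain ⟨e, hf, hp⟩ := hiso
  intro r hr σ hbody
  have key : ∀ a : Atom Func arF Pred arP ℕ,
      a.holds M (fun n => e.symm (σ n)) ↔ a.holds N σ := by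
    intro a
    unfold Atom.holds
    rw [hp]
    have harg : ∀ i, e ((a.args i).eval M fun n => e.symm (σ n)) = (a.args i).eval N σ := by
      intro i
      rw [iso_eval e hf]
      exact congrArg (fun τ => (a.args i).eval N τ) (funext fun n => e.apply_symm_apply (σ n))
    exact iff_of_eq (congrArg _ (funext harg))
  exact (key r.head).1 (hM r hr _ fun b hb => (key b).2 (hbody b hb))

/-- The least Herbrand model satisfies all rules of `D`. -/
lemma satRules_LHM (D : Set (Rule Func arF Pred arP)) (h : Nonempty (GTerm Func arF)) :
    SatRules (LHM D h) D := by
  intro r hr σ hbody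
  intro IP hIP
  have hev : ∀ t : Term Func arF ℕ,
      Term.eval (LHM D h) σ t = Term.eval (HStruc h IP) σ t :=
    fun t => eval_hstruc σ t
  have := hIP r hr σ (fun b hb => by
    have hb' := hbody b hb IP hIP
    show IP b.pred fun i => (b.args i).eval (HStruc h IP) σ
    have heq : (fun i => (b.args i).eval (HStruc h IP) σ)
        = fun i => (b.args i).eval (LHM D h) σ := funext fun i => (hev _).symm
    rw [heq]
    exact hb')
  show IP r.head.pred fun i => (r.head.args i).eval (LHM D h) σ
  have heq : (fun i => (r.head.args i).eval (LHM D h) σ)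
      = fun i => (r.head.args i).eval (HStruc h IP) σ := funext fun i => hev _
  rw [heq]
  exact this

/-- For a definite logic program `P` whose rules `D` define every predicate
symbol, with `CF` containing all constants and functors of `P` and at least one constant,
a structure `M` (over `Σ` = all symbols of `P` and `CF`) satisfies `D` as a definition and
satisfies `Herb(CF)` iff `M` is isomorphic relative to `Σ` to the least Herbrand model. -/
theorem statement_2 (D : Set (Rule Func arF Pred arP))
    (hdef : ∀ p : Pred, ∃ r ∈ D, r.head.pred = p)
    (hc : ∃ f : Func, arF f = 0)
    (M : Struc Func arF Pred arP) :
    (SatDef D M ∧ SatHerb M) ↔ Iso M (LHM D (nonempty_gterm hc)) := by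
  set h : Nonempty (GTerm Func arF) := nonempty_gterm hc with hh
  constructor
  · rintro ⟨⟨hsat, hmin⟩, e', he'⟩
    have hfsymm : ∀ (f : Func) (args : Fin (arF f) → M.carrier),
        e'.symm (M.interpF f args) = Term.func f (fun i => e'.symm (args i)) := by
      intro f args
      apply e'.injective
      rw [Equiv.apply_symm_apply, he']
      exact congrArg _ (funext fun i => (e'.apply_symm_apply (args i)).symm)
    refine ⟨e'.symm, hfsymm, ?_⟩
    intro p args
    constructor
    · intro hMp IP hIP
      have hsatM : SatRules
          ⟨M.carrier, M.nonempty, M.interpF, fun q a => IP q fun i => e'.symm (a i)⟩ D := by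
        refine iso_satRules (M := HStruc h IP)
          (N := ⟨M.carrier, M.nonempty, M.interpF, fun q a => IP q fun i => e'.symm (a i)⟩)
          ⟨e', he', ?_⟩ hIP
        intro q a
        exact iff_of_eq (congrArg _ (funext fun i => (e'.symm_apply_apply (a i)).symm))
      exact hmin _ hsatM p args hMp
    · intro hL
      have hsatN : SatRules (HStruc h fun q a => M.interpP q fun i => e' (a i)) D := by
        refine iso_satRules (M := M)
          (N := HStruc h fun q a => M.interpP q fun i => e' (a i))
          ⟨e'.symm, hfsymm, ?_⟩ hsat
        intro q a
        exact iff_of_eq (congrArg _ (funext fun i => (e'.apply_symm_apply (a i)).symm))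
      have h2 : M.interpP p fun i => e' (e'.symm (args i)) := hL _ hsatN
      have heq : (fun i => e' (e'.symm (args i))) = args :=
        funext fun i => e'.apply_symm_apply (args i)
      exact heq ▸ h2
  · rintro ⟨e, hf, hp⟩
    have hfsymm : ∀ (f : Func) (args : Fin (arF f) → GTerm Func arF),
        e.symm (Term.func f args) = M.interpF f (fun i => e.symm (args i)) := by
      intro f args
      apply e.injective
      exact (e.apply_symm_apply _).trans
        ((congrArg (Term.func f) (funext fun i => (e.apply_symm_apply (args i)).symm)).trans
          (hf _ _).symm)
    have hisoLM : Iso (LHM D h) M := by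
      refine ⟨e.symm, hfsymm, ?_⟩
      intro p a
      have := hp p (fun i => e.symm (a i))
      simp only [Equiv.apply_symm_apply] at this
      exact this.symm
    refine ⟨⟨iso_satRules hisoLM (satRules_LHM D h), ?_⟩, e.symm, hfsymm⟩
    intro IP hIP p args hMp
    have hsat' : SatRules (HStruc h fun q a => IP q fun i => e.symm (a i)) D := by
      refine iso_satRules (M := ⟨M.carrier, M.nonempty, M.interpF, IP⟩)
        (N := HStruc h fun q a => IP q fun i => e.symm (a i))
        ⟨e, hf, ?_⟩ hIP
      intro q a
      exact iff_of_eq (congrArg _ (funext fun i => (e.symm_apply_apply (a i)).symm))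
    have h2 : IP p fun i => e.symm (e (args i)) := (hp p args).1 hMp _ hsat'
    have heq : (fun i => e.symm (e (args i))) = args :=
      funext fun i => e.symm_apply_apply (args i)
    exact heq ▸ h2
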